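/- The statistics exc and des are equidistributed over S_n: for every j, the number of permutations of [n] with exactly j excedances equals the number of permutations of [n] with exactly j descents. -/

import Mathlib

open scoped Classical

/-- The number of excedances of `σ ∈ S_n` (positions `i` with `σ(i) > i`). -/
def excNum {n : ℕ} (σ : Equiv.Perm (Fin n)) : ℕ :=
  (Finset.univ.filter (fun i : Fin n => (i : ℕ) < (σ i : ℕ))).card

/-- The number of descents of `σ ∈ S_n`. -/
def desNum {n : ℕ} (σ : Equiv.Perm (Fin n)) : ℕ :=
  ((Finset.range n).filter (fun i =>
    ∃ h : i + 1 < n, σ ⟨i + 1, h⟩ < σ ⟨i, Nat.lt_of_succ_lt h⟩)).card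

section Aux

variable {n : ℕ}

/-! ### Basic reformulations -/

/-- descent indicator at position `i` (as a natural number). -/
def dsc {n : ℕ} (w : Equiv.Perm (Fin n)) (i : ℕ) : ℕ :=
  if h : i + 1 < n then (if w ⟨i + 1, h⟩ < w ⟨i, by omega⟩ then 1 else 0) else 0

lemma dsc_le_one (w : Equiv.Perm (Fin n)) (i : ℕ) : dsc w i ≤ 1 := by
  unfold dsc; split <;> [split <;> omega; omega]

lemma desNum_eq_sum (w : Equiv.Perm (Fin n)) : desNum w = ∑ i ∈ Finset.range n, dsc w i := by
  rw [desNum, Finset.card_filter]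
  refine Finset.sum_congr rfl fun i _ => ?_
  by_cases h : i + 1 < n
  · simp only [dsc, dif_pos h]
    congr 1
    simp [h]
  · simp [dsc, h]

lemma excNum_eq_sum (σ : Equiv.Perm (Fin n)) :
    excNum σ = ∑ i : Fin n, if (i : ℕ) < (σ i : ℕ) then 1 else 0 := by
  rw [excNum, Finset.card_filter]

lemma excNum_le (σ : Equiv.Perm (Fin n)) : excNum σ ≤ n := by
  calc excNum σ ≤ (Finset.univ : Finset (Fin n)).card := Finset.card_filter_le _ _
  _ = n := by simp

lemma desNum_le (σ : Equiv.Perm (Fin n)) : desNum σ ≤ n := by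
  calc desNum σ ≤ (Finset.range n).card := Finset.card_filter_le _ _
  _ = n := by simp

/-! ### Extension of a permutation and cycle-insertion (excedance side) -/

def extPerm (σ : Equiv.Perm (Fin n)) : Equiv.Perm (Fin (n + 1)) where
  toFun := Fin.lastCases (Fin.last n) (fun i => (σ i).castSucc)
  invFun := Fin.lastCases (Fin.last n) (fun i => (σ⁻¹ i).castSucc)
  left_inv := by intro i; induction i using Fin.lastCases <;> simp
  right_inv := by intro i; induction i using Fin.lastCases <;> simp

@[simp] lemma extPerm_last (σ : Equiv.Perm (Fin n)) : extPerm σ (Fin.last n) = Fin.last n := by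
  simp [extPerm]

@[simp] lemma extPerm_castSucc (σ : Equiv.Perm (Fin n)) (i : Fin n) :
    extPerm σ i.castSucc = (σ i).castSucc := by simp [extPerm]

def fE {n : ℕ} (x : Equiv.Perm (Fin n) × Fin (n + 1)) : Equiv.Perm (Fin (n + 1)) :=
  extPerm x.1 * Equiv.swap x.2 (Fin.last n)

lemma fE_pivot (x : Equiv.Perm (Fin n) × Fin (n + 1)) : fE x x.2 = Fin.last n := by
  simp [fE, Equiv.Perm.mul_apply, Equiv.swap_apply_left]

lemma card_prod_perm : Fintype.card (Equiv.Perm (Fin n) × Fin (n + 1)) =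
    Fintype.card (Equiv.Perm (Fin (n + 1))) := by
  simp [Fintype.card_perm, Nat.factorial_succ, mul_comm]

lemma fE_bijective : Function.Bijective (fE (n := n)) := by
  rw [Fintype.bijective_iff_injective_and_card]
  refine ⟨?_, card_prod_perm⟩
  rintro ⟨σ, m⟩ ⟨τ, k⟩ h
  have hm : fE (σ, m) m = Fin.last n := fE_pivot _
  have hk : fE (σ, m) k = Fin.last n := by rw [h]; exact fE_pivot _
  have hmk : m = k := (fE (σ, m)).injective (hm.trans hk.symm)
  subst hmk
  have hστ : extPerm σ = extPerm τ :=
    mul_right_cancel (a := extPerm σ) (b := Equiv.swap m (Fin.last n)) (c := extPerm τ) h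
  have : σ = τ := by
    ext i
    have h2 := congrArg (fun f : Equiv.Perm (Fin (n+1)) => f i.castSucc) hστ
    simpa [Fin.ext_iff] using h2
  simp [this]

lemma fE_last (σ : Equiv.Perm (Fin n)) : fE (σ, Fin.last n) = extPerm σ := by
  unfold fE
  rw [Equiv.swap_self]
  ext i
  simp [Equiv.Perm.mul_apply]

lemma excNum_extPerm (σ : Equiv.Perm (Fin n)) : excNum (extPerm σ) = excNum σ := by
  rw [excNum_eq_sum, excNum_eq_sum, Fin.sum_univ_castSucc]
  simp

lemma excNum_insert (σ : Equiv.Perm (Fin n)) (m : Fin n) :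
    excNum (extPerm σ * Equiv.swap m.castSucc (Fin.last n)) =
      if (m : ℕ) < (σ m : ℕ) then excNum σ else excNum σ + 1 := by
  set τ := extPerm σ * Equiv.swap m.castSucc (Fin.last n) with hτ
  have hlast : τ (Fin.last n) = (σ m).castSucc := by
    simp [hτ, Equiv.swap_apply_right]
  have hm : τ m.castSucc = Fin.last n := by
    simp [hτ, Equiv.swap_apply_left]
  have hother : ∀ i : Fin n, i ≠ m → τ i.castSucc = (σ i).castSucc := by
    intro i hi
    have h1 : i.castSucc ≠ m.castSucc := by simpa [Fin.ext_iff] using hi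
    have h2 : i.castSucc ≠ Fin.last n := Fin.castSucc_lt_last i |>.ne
    simp [hτ, Equiv.swap_apply_of_ne_of_ne h1 h2]
  have key : excNum τ = 1 + ∑ i ∈ Finset.univ.erase m, (if (i : ℕ) < (σ i : ℕ) then 1 else 0) := by
    rw [excNum_eq_sum, Fin.sum_univ_castSucc]
    have hl : (if ((Fin.last n : Fin (n+1)) : ℕ) < (τ (Fin.last n) : ℕ) then 1 else 0) = 0 := by
      rw [hlast, if_neg]
      simp only [Fin.val_last, Fin.coe_castSucc]
      exact Nat.not_lt.mpr (σ m).isLt.le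
    rw [hl, add_zero, ← Finset.add_sum_erase _ _ (Finset.mem_univ m)]
    have h1 : (if ((m.castSucc : Fin (n+1)) : ℕ) < (τ m.castSucc : ℕ) then 1 else 0) = 1 := by
      rw [hm]; simp [Fin.last, m.isLt]
    rw [h1]
    congr 1
    refine Finset.sum_congr rfl fun i hi => ?_
    rw [hother i (Finset.mem_erase.mp hi).1]
    simp
  have key2 : excNum σ = (if (m : ℕ) < (σ m : ℕ) then 1 else 0)
      + ∑ i ∈ Finset.univ.erase m, (if (i : ℕ) < (σ i : ℕ) then 1 else 0) := by
    rw [excNum_eq_sum, ← Finset.add_sum_erase _ _ (Finset.mem_univ m)]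
  by_cases h : (m : ℕ) < (σ m : ℕ)
  · rw [if_pos h]; rw [if_pos h] at key2; omega
  · rw [if_neg h]; rw [if_neg h] at key2; omega

/-! ### Word-insertion (descent side) -/

def insPerm (w : Equiv.Perm (Fin n)) (p : Fin (n + 1)) : Equiv.Perm (Fin (n + 1)) where
  toFun := p.insertNth (Fin.last n) (fun i => (w i).castSucc)
  invFun := Fin.lastCases p (fun u => p.succAbove (w⁻¹ u))
  left_inv := by
    intro i
    induction' i using p.succAboveCases <;> simp
  right_inv := by
    intro v
    induction v using Fin.lastCases <;> simp

@[simp] lemma insPerm_same (w : Equiv.Perm (Fin n)) (p : Fin (n + 1)) :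
    insPerm w p p = Fin.last n := by simp [insPerm]

@[simp] lemma insPerm_succAbove (w : Equiv.Perm (Fin n)) (p : Fin (n + 1)) (i : Fin n) :
    insPerm w p (p.succAbove i) = (w i).castSucc := by simp [insPerm]

lemma insPerm_lt (w : Equiv.Perm (Fin n)) (p : Fin (n + 1)) {i : ℕ} (h : i < (p : ℕ)) :
    insPerm w p ⟨i, by have := p.isLt; omega⟩ =
      (w ⟨i, by have := p.isLt; omega⟩).castSucc := by
  have hin : i < n := by have := p.isLt; omega
  have : (⟨i, by omega⟩ : Fin (n+1)) = p.succAbove ⟨i, hin⟩ := by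
    rw [Fin.succAbove_of_castSucc_lt]
    · rfl
    · simpa [Fin.lt_def] using h
  rw [this, insPerm_succAbove]

lemma insPerm_gt (w : Equiv.Perm (Fin n)) (p : Fin (n + 1)) {i : ℕ} (h : (p : ℕ) < i)
    (h2 : i < n + 1) :
    insPerm w p ⟨i, h2⟩ = (w ⟨i - 1, by omega⟩).castSucc := by
  have : (⟨i, h2⟩ : Fin (n+1)) = p.succAbove ⟨i - 1, by omega⟩ := by
    rw [Fin.succAbove_of_le_castSucc]
    · simp [Fin.ext_iff, Fin.succ]; omega
    · simp [Fin.le_def]; omega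
  rw [this, insPerm_succAbove]

lemma insPerm_at (w : Equiv.Perm (Fin n)) (p : Fin (n + 1)) {i : ℕ} (h : i = (p : ℕ))
    (h2 : i < n + 1) : insPerm w p ⟨i, h2⟩ = Fin.last n := by
  have : (⟨i, h2⟩ : Fin (n+1)) = p := by simp [Fin.ext_iff, h]
  rw [this, insPerm_same]

def fD {n : ℕ} (x : Equiv.Perm (Fin n) × Fin (n + 1)) : Equiv.Perm (Fin (n + 1)) :=
  insPerm x.1 x.2

lemma fD_bijective : Function.Bijective (fD (n := n)) := by
  rw [Fintype.bijective_iff_injective_and_card]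
  refine ⟨?_, card_prod_perm⟩
  rintro ⟨w, p⟩ ⟨v, q⟩ h
  have hp : fD (w, p) p = Fin.last n := insPerm_same w p
  have hq : fD (w, p) q = Fin.last n := by rw [h]; exact insPerm_same v q
  have hpq : p = q := (fD (w, p)).injective (hp.trans hq.symm)
  subst hpq
  have : w = v := by
    ext i
    have h2 := congrArg (fun f : Equiv.Perm (Fin (n+1)) => f (p.succAbove i)) h
    simp only [fD, insPerm_succAbove] at h2
    simpa [Fin.ext_iff] using h2
  simp [this]

lemma desNum_insPerm (w : Equiv.Perm (Fin n)) (p : Fin (n + 1)) :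
    desNum (insPerm w p) = desNum w +
      (if (p : ℕ) = n ∨ (0 < (p : ℕ) ∧ dsc w ((p : ℕ) - 1) = 1) then 0 else 1) := by
  set σ := insPerm w p with hσ
  set P := (p : ℕ) with hPdef
  have hPle : P ≤ n := Nat.lt_succ_iff.mp p.isLt
  -- pointwise relations
  have ha : ∀ i : ℕ, i + 1 < P → dsc σ i = dsc w i := by
    intro i hi
    have h1 : i + 1 < n + 1 := by omega
    have h1' : i + 1 < n := by omega
    rw [dsc, dif_pos h1, dsc, dif_pos h1']
    rw [hσ, insPerm_lt w p (show i + 1 < P from hi), insPerm_lt w p (show i < P by omega)]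
    simp [Fin.castSucc_lt_castSucc_iff]
  have hb : 0 < P → dsc σ (P - 1) = 0 := by
    intro hP0
    have h1 : (P - 1) + 1 < n + 1 := by omega
    rw [dsc, dif_pos h1, if_neg]
    rw [hσ, insPerm_at w p (show P - 1 + 1 = P by omega), insPerm_lt w p (show P - 1 < P by omega)]
    exact not_lt.mpr (Fin.le_last _)
  have hc1 : P < n → dsc σ P = 1 := by
    intro hPn
    have h1 : P + 1 < n + 1 := by omega
    rw [dsc, dif_pos h1, if_pos]
    rw [hσ, insPerm_at w p rfl, insPerm_gt w p (show P < P + 1 by omega)]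
    exact Fin.castSucc_lt_last _
  have hc2 : P = n → dsc σ P = 0 := by
    intro hPn
    rw [dsc, dif_neg]; omega
  have hd : ∀ i : ℕ, P < i → dsc σ i = dsc w (i - 1) := by
    intro i hi
    by_cases h1 : i + 1 < n + 1
    · have h1' : (i - 1) + 1 < n := by omega
      rw [dsc, dif_pos h1, dsc, dif_pos h1']
      rw [hσ, insPerm_gt w p (show P < i + 1 by omega), insPerm_gt w p hi]
      have : i + 1 - 1 = (i - 1) + 1 := by omega
      simp_rw [this]
      simp [Fin.castSucc_lt_castSucc_iff]
    · rw [dsc, dif_neg h1, dsc, dif_neg (by omega)]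
  -- sum computation
  have e1 : desNum σ = (∑ i ∈ Finset.range P, dsc σ i) + ∑ i ∈ Finset.Ico P (n + 1), dsc σ i := by
    rw [desNum_eq_sum, Finset.range_eq_Ico,
      ← Finset.sum_Ico_consecutive _ (Nat.zero_le P) (by omega), Finset.range_eq_Ico]
  have e2 : ∑ i ∈ Finset.Ico P (n + 1), dsc σ i = dsc σ P + ∑ i ∈ Finset.Ico P n, dsc w i := by
    rw [Finset.sum_eq_sum_Ico_succ_bot (by omega)]
    congr 1
    rw [Finset.sum_Ico_eq_sum_range, Finset.sum_Ico_eq_sum_range]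
    have hlen : n + 1 - (P + 1) = n - P := by omega
    rw [hlen]
    refine Finset.sum_congr rfl fun i _ => ?_
    rw [hd (P + 1 + i) (by omega)]
    congr 1
    omega
  have e3 : desNum w = (∑ i ∈ Finset.range P, dsc w i) + ∑ i ∈ Finset.Ico P n, dsc w i := by
    rw [desNum_eq_sum, Finset.range_eq_Ico,
      ← Finset.sum_Ico_consecutive _ (Nat.zero_le P) hPle, Finset.range_eq_Ico]
  -- combine
  rcases Nat.eq_zero_or_pos P with hP0 | hP0
  · -- P = 0
    have hz : ∑ i ∈ Finset.range P, dsc σ i = 0 := by rw [hP0]; simp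
    have hz' : ∑ i ∈ Finset.range P, dsc w i = 0 := by rw [hP0]; simp
    rcases Nat.lt_or_ge P n with hPn | hPn
    · have hv := hc1 hPn
      split_ifs with h <;> omega
    · have hPn' : P = n := by omega
      have hv := hc2 hPn'
      split_ifs with h <;> omega
  · -- P > 0
    set Q := P - 1 with hQdef
    have hPQ : P = Q + 1 := by omega
    have f1 : ∑ i ∈ Finset.range P, dsc σ i = ∑ i ∈ Finset.range Q, dsc w i := by
      rw [hPQ, Finset.sum_range_succ]
      have : dsc σ Q = 0 := hb hP0
      rw [this, add_zero]
      refine Finset.sum_congr rfl fun i hi => ?_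
      exact ha i (by have := Finset.mem_range.mp hi; omega)
    have f2 : ∑ i ∈ Finset.range P, dsc w i = (∑ i ∈ Finset.range Q, dsc w i) + dsc w Q := by
      rw [hPQ, Finset.sum_range_succ]
    have hQ1 : dsc w Q ≤ 1 := dsc_le_one w Q
    rcases Nat.lt_or_ge P n with hPn | hPn
    · have hv := hc1 hPn
      split_ifs with h <;> omega
    · have hPn' : P = n := by omega
      have hv := hc2 hPn'
      have hq0 : dsc w Q = 0 := by rw [dsc, dif_neg]; omega
      split_ifs with h <;> omega

/-! ### Counting plumbing -/

/-- Transfer the count through a bijection from a product. -/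
lemma card_filter_eq_sum {α β γ : Type*} [Fintype α] [Fintype β] [Fintype γ]
    (f : α × β → γ) (hf : Function.Bijective f) (P : γ → Prop) [DecidablePred P] :
    (Finset.univ.filter P).card = ∑ a : α, (Finset.univ.filter fun b : β => P (f (a, b))).card := by
  have h1 : (Finset.univ.filter fun x : α × β => P (f x)).card = (Finset.univ.filter P).card := by
    apply Finset.card_equiv (Equiv.ofBijective f hf)
    intro x
    simp [Equiv.ofBijective]
  rw [← h1, Finset.card_filter]
  rw [Fintype.sum_prod_type]
  refine Finset.sum_congr rfl fun a _ => ?_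
  rw [Finset.card_filter]

/-- Group a sum over all elements by the value of a statistic. -/
lemma sum_stat_fiber {α : Type*} [Fintype α] (stat : α → ℕ) (hle : ∀ a, stat a ≤ n)
    (H : ℕ → ℕ) :
    ∑ a : α, H (stat a) =
      ∑ k ∈ Finset.range (n + 1), (Finset.univ.filter fun a => stat a = k).card * H k := by
  rw [← Finset.sum_fiberwise_of_maps_to (g := stat) (t := Finset.range (n + 1))
    (fun a _ => Finset.mem_range.mpr (Nat.lt_succ_of_le (hle a)))]
  refine Finset.sum_congr rfl fun k _ => ?_
  rw [Finset.sum_congr rfl (fun a ha => ?_), Finset.sum_const, smul_eq_mul]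
  exact congrArg H (Finset.mem_filter.mp ha).2

/-! ### Fiber counts -/

lemma inner_exc (σ : Equiv.Perm (Fin n)) (j : ℕ) :
    (Finset.univ.filter fun m : Fin (n + 1) => excNum (fE (σ, m)) = j).card =
      (if excNum σ = j then j + 1 else if excNum σ + 1 = j then n - excNum σ else 0) := by
  rw [Finset.card_filter]
  rw [Fin.sum_univ_castSucc]
  have hlast : (if excNum (fE (σ, Fin.last n)) = j then (1:ℕ) else 0) =
      (if excNum σ = j then 1 else 0) := by
    rw [fE_last, excNum_extPerm]
  rw [hlast]
  have hterm : ∀ m : Fin n, excNum (fE (σ, m.castSucc)) =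
      if (m : ℕ) < (σ m : ℕ) then excNum σ else excNum σ + 1 := fun m => excNum_insert σ m
  by_cases h1 : excNum σ = j
  · rw [if_pos h1]
    have : ∀ m : Fin n, (if excNum (fE (σ, m.castSucc)) = j then (1:ℕ) else 0) =
        (if (m : ℕ) < (σ m : ℕ) then 1 else 0) := by
      intro m
      rw [hterm m]
      split_ifs <;> first | rfl | omega
    rw [Finset.sum_congr rfl fun m _ => this m, ← excNum_eq_sum, h1]
    simp [h1]
  · rw [if_neg h1]
    by_cases h2 : excNum σ + 1 = j
    · rw [if_pos h2]
      have : ∀ m : Fin n, (if excNum (fE (σ, m.castSucc)) = j then (1:ℕ) else 0) =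
          (if (m : ℕ) < (σ m : ℕ) then 0 else 1) := by
        intro m
        rw [hterm m]
        split_ifs <;> first | rfl | omega
      rw [Finset.sum_congr rfl fun m _ => this m, if_neg h1, add_zero]
      have hsplit := Finset.card_filter_add_card_filter_not
        (s := (Finset.univ : Finset (Fin n))) (p := fun i => (i : ℕ) < (σ i : ℕ))
      have hsum : ∑ m : Fin n, (if (m : ℕ) < (σ m : ℕ) then (0:ℕ) else 1) =
          (Finset.univ.filter fun i : Fin n => ¬ ((i : ℕ) < (σ i : ℕ))).card := by
        rw [Finset.card_filter]
        refine Finset.sum_congr rfl fun m _ => ?_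
        split_ifs <;> rfl
      rw [hsum]
      simp only [not_lt] at hsplit hsum ⊢
      have hexc : excNum σ = (Finset.univ.filter fun i : Fin n => (i : ℕ) < (σ i : ℕ)).card := rfl
      have hcard : (Finset.univ : Finset (Fin n)).card = n := by simp
      omega
    · rw [if_neg h2]
      have : ∀ m : Fin n, (if excNum (fE (σ, m.castSucc)) = j then (1:ℕ) else 0) = 0 := by
        intro m
        rw [hterm m]
        split_ifs <;> first | rfl | omega
      rw [Finset.sum_congr rfl fun m _ => this m]
      simp [h1]

lemma card_cond (w : Equiv.Perm (Fin n)) :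
    (Finset.univ.filter fun p : Fin (n + 1) =>
      ((p : ℕ) = n ∨ (0 < (p : ℕ) ∧ dsc w ((p : ℕ) - 1) = 1))).card = desNum w + 1 := by
  rw [Finset.card_filter]
  have h1 : ∑ p : Fin (n + 1),
      (if ((p : ℕ) = n ∨ (0 < (p : ℕ) ∧ dsc w ((p : ℕ) - 1) = 1)) then (1:ℕ) else 0) =
      ∑ i ∈ Finset.range (n + 1), (if (i = n ∨ (0 < i ∧ dsc w (i - 1) = 1)) then (1:ℕ) else 0) :=
    Fin.sum_univ_eq_sum_range
      (fun i => if (i = n ∨ (0 < i ∧ dsc w (i - 1) = 1)) then (1:ℕ) else 0) (n + 1)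
  rw [h1, Finset.sum_range_succ, if_pos (Or.inl rfl)]
  congr 1
  have h2 : ∀ i ∈ Finset.range n,
      (if (i = n ∨ (0 < i ∧ dsc w (i - 1) = 1)) then (1:ℕ) else 0) =
      (if (0 < i ∧ dsc w (i - 1) = 1) then (1:ℕ) else 0) := by
    intro i hi
    have := Finset.mem_range.mp hi
    split_ifs with hA hB hB <;> first | rfl | (exfalso; rcases hA with h|h <;> omega) | omega
  rw [Finset.sum_congr rfl h2]
  rcases n with _ | m
  · simp [desNum_eq_sum]
  · rw [Finset.sum_range_succ']
    have h3 : ∀ i, (if (0 < i + 1 ∧ dsc w (i + 1 - 1) = 1) then (1:ℕ) else 0) = dsc w i := by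
      intro i
      have := dsc_le_one w i
      simp only [Nat.add_sub_cancel]
      split_ifs with h <;> omega
    rw [Finset.sum_congr rfl (fun i _ => h3 i)]
    have h4 : (if (0 < 0 ∧ dsc w (0 - 1) = 1) then (1:ℕ) else 0) = 0 := by
      rw [if_neg]; omega
    rw [h4, add_zero, desNum_eq_sum, Finset.sum_range_succ]
    have h5 : dsc w m = 0 := by rw [dsc, dif_neg]; omega
    rw [h5, add_zero]

lemma inner_des (w : Equiv.Perm (Fin n)) (j : ℕ) :
    (Finset.univ.filter fun p : Fin (n + 1) => desNum (fD (w, p)) = j).card =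
      (if desNum w = j then j + 1 else if desNum w + 1 = j then n - desNum w else 0) := by
  rw [Finset.card_filter]
  set D := desNum w with hD
  set cond := fun p : Fin (n + 1) =>
    ((p : ℕ) = n ∨ (0 < (p : ℕ) ∧ dsc w ((p : ℕ) - 1) = 1)) with hcond
  have hterm : ∀ p : Fin (n + 1),
      desNum (fD (w, p)) = D + (if cond p then 0 else 1) := fun p => desNum_insPerm w p
  by_cases h1 : D = j
  · rw [if_pos h1]
    have : ∀ p : Fin (n + 1), (if desNum (fD (w, p)) = j then (1:ℕ) else 0) =
        (if cond p then 1 else 0) := by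
      intro p
      rw [hterm p]
      split_ifs <;> omega
    rw [Finset.sum_congr rfl fun p _ => this p, ← Finset.card_filter]
    rw [show (Finset.univ.filter cond).card = D + 1 from card_cond w]
    omega
  · rw [if_neg h1]
    by_cases h2 : D + 1 = j
    · rw [if_pos h2]
      have : ∀ p : Fin (n + 1), (if desNum (fD (w, p)) = j then (1:ℕ) else 0) =
          (if cond p then 0 else 1) := by
        intro p
        rw [hterm p]
        split_ifs <;> omega
      rw [Finset.sum_congr rfl fun p _ => this p]
      have hsum : ∑ p : Fin (n + 1), (if cond p then (0:ℕ) else 1) =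
          (Finset.univ.filter fun p => ¬ cond p).card := by
        rw [Finset.card_filter]
        refine Finset.sum_congr rfl fun p _ => ?_
        split_ifs <;> rfl
      rw [hsum]
      have hsplit := Finset.card_filter_add_card_filter_not
        (s := (Finset.univ : Finset (Fin (n+1)))) (p := cond)
      have hcc : (Finset.univ.filter cond).card = D + 1 := card_cond w
      have hcu : (Finset.univ : Finset (Fin (n+1))).card = n + 1 := by simp
      have hDle := Finset.card_filter_le (Finset.univ : Finset (Fin (n+1))) cond
      omega
    · rw [if_neg h2]
      have : ∀ p : Fin (n + 1), (if desNum (fD (w, p)) = j then (1:ℕ) else 0) = 0 := by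
        intro p
        rw [hterm p]
        split_ifs <;> omega
      rw [Finset.sum_congr rfl fun p _ => this p]
      simp

/-! ### Recurrences and the main induction -/

def cntE (n j : ℕ) : ℕ :=
  (Finset.univ.filter fun σ : Equiv.Perm (Fin n) => excNum σ = j).card

def cntD (n j : ℕ) : ℕ :=
  (Finset.univ.filter fun σ : Equiv.Perm (Fin n) => desNum σ = j).card

lemma cntE_succ (j : ℕ) :
    cntE (n + 1) j = ∑ k ∈ Finset.range (n + 1),
      cntE n k * (if k = j then j + 1 else if k + 1 = j then n - k else 0) := by
  rw [cntE, card_filter_eq_sum fE fE_bijective (fun σ => excNum σ = j)]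
  have h1 : ∀ σ : Equiv.Perm (Fin n),
      (Finset.univ.filter fun m : Fin (n + 1) => excNum (fE (σ, m)) = j).card =
      (fun k => if k = j then j + 1 else if k + 1 = j then n - k else 0) (excNum σ) :=
    fun σ => inner_exc σ j
  rw [Finset.sum_congr rfl fun σ _ => h1 σ,
    sum_stat_fiber (n := n) excNum excNum_le
      (fun k => if k = j then j + 1 else if k + 1 = j then n - k else 0)]
  rfl

lemma cntD_succ (j : ℕ) :
    cntD (n + 1) j = ∑ k ∈ Finset.range (n + 1),
      cntD n k * (if k = j then j + 1 else if k + 1 = j then n - k else 0) := by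
  rw [cntD, card_filter_eq_sum fD fD_bijective (fun σ => desNum σ = j)]
  have h1 : ∀ w : Equiv.Perm (Fin n),
      (Finset.univ.filter fun p : Fin (n + 1) => desNum (fD (w, p)) = j).card =
      (fun k => if k = j then j + 1 else if k + 1 = j then n - k else 0) (desNum w) :=
    fun w => inner_des w j
  rw [Finset.sum_congr rfl fun w _ => h1 w,
    sum_stat_fiber (n := n) desNum desNum_le
      (fun k => if k = j then j + 1 else if k + 1 = j then n - k else 0)]
  rfl

lemma cnt_eq : ∀ (n j : ℕ), cntE n j = cntD n j := by
  intro n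
  induction n with
  | zero =>
    intro j
    have e : ∀ σ : Equiv.Perm (Fin 0), excNum σ = desNum σ := by
      intro σ
      have h1 : excNum σ = 0 := by simp [excNum]
      have h2 : desNum σ = 0 := by simp [desNum]
      rw [h1, h2]
    unfold cntE cntD
    congr 1
  | succ n ih =>
    intro j
    rw [cntE_succ, cntD_succ]
    exact Finset.sum_congr rfl fun k _ => by rw [ih k]

end Aux

/-- `exc` and `des` are equidistributed over `S_n`: for each `j`, the number of
permutations of `[n]` with `j` excedances equals the number with `j` descents. -/
theorem exc_des_equidistributed (n j : ℕ) :
    Nat.card {σ : Equiv.Perm (Fin n) // excNum σ = j} =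
      Nat.card {σ : Equiv.Perm (Fin n) // desNum σ = j} := by
  have h1 : Nat.card {σ : Equiv.Perm (Fin n) // excNum σ = j} = cntE n j := by
    rw [Nat.card_eq_fintype_card, Fintype.card_subtype, cntE]
  have h2 : Nat.card {σ : Equiv.Perm (Fin n) // desNum σ = j} = cntD n j := by
    rw [Nat.card_eq_fintype_card, Fintype.card_subtype, cntD]
  rw [h1, h2, cnt_eq]
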